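/- arXiv:1409.0995 — 5 statements merged into one kernel-verified Lean document; each statement's English description precedes it below -/
import Mathlib

section
/- Let (n_k) be a strictly increasing sequence of positive integers with positive upper density δ. Then there exists a map φ: ℕ → ℕ such that for every strictly increasing sequence (k_s) of positive integers, the set {n_k : k ∈ ⋃_s [k_s, k_s + φ(k_s)]} has upper density equal to δ. -/
/-- The upper density of a set of natural numbers:
`limsup_N #(A ∩ [0,N]) / (N+1)`. -/
noncomputable def upperDensity (A : Set ℕ) : ℝ :=
  Filter.atTop.limsup (fun N : ℕ => ((A ∩ Set.Iic N).ncard : ℝ) / (N + 1))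

open Filter

private lemma ratio_nonneg (A : Set ℕ) (N : ℕ) :
    0 ≤ ((A ∩ Set.Iic N).ncard : ℝ) / (N + 1) := by positivity

private lemma ratio_le_one (A : Set ℕ) (N : ℕ) :
    ((A ∩ Set.Iic N).ncard : ℝ) / (N + 1) ≤ 1 := by
  rw [div_le_one (by positivity)]
  have h : (A ∩ Set.Iic N).ncard ≤ (Set.Iic N).ncard :=
    Set.ncard_le_ncard Set.inter_subset_right (Set.finite_Iic N)
  have h2 : (Set.Iic N).ncard = N + 1 := by simp [Set.ncard_eq_toFinset_card']
  rw [h2] at h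
  exact_mod_cast h

private lemma bddAbove (A : Set ℕ) :
    IsBoundedUnder (· ≤ ·) atTop (fun N : ℕ => ((A ∩ Set.Iic N).ncard : ℝ) / (N + 1)) :=
  isBoundedUnder_of ⟨1, fun N => ratio_le_one A N⟩

private lemma bddBelow (A : Set ℕ) :
    IsBoundedUnder (· ≥ ·) atTop (fun N : ℕ => ((A ∩ Set.Iic N).ncard : ℝ) / (N + 1)) :=
  isBoundedUnder_of ⟨0, fun N => ratio_nonneg A N⟩

/-- Key counting estimate. -/
private lemma count_key (n : ℕ → ℕ) (hmono : StrictMono n) (m N : ℕ) (U : Set ℕ)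
    (hU : Set.Icc m (m + N) ⊆ U) :
    (Set.range n ∩ Set.Iic N).ncard ≤ ((n '' U) ∩ Set.Iic N).ncard + m := by
  have hle : ∀ j, j ≤ n j := fun j => hmono.le_apply
  set S : Set ℕ := {j | n j ≤ N} with hS
  set T : Set ℕ := {j | m ≤ j ∧ n j ≤ N} with hT
  have hSsub : S ⊆ Set.Iic N := fun j hj => le_trans (hle j) hj
  have hSfin : S.Finite := (Set.finite_Iic N).subset hSsub
  have h1 : Set.range n ∩ Set.Iic N = n '' S := by
    ext x
    constructor
    · rintro ⟨⟨j, rfl⟩, hx⟩; exact ⟨j, hx, rfl⟩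
    · rintro ⟨j, hj, rfl⟩; exact ⟨⟨j, rfl⟩, hj⟩
  have h2 : n '' T ⊆ (n '' U) ∩ Set.Iic N := by
    rintro x ⟨j, ⟨hj1, hj2⟩, rfl⟩
    exact ⟨⟨j, hU ⟨hj1, le_trans (le_trans (hle j) hj2) (Nat.le_add_left N m)⟩, rfl⟩, hj2⟩
  have h3 : S ⊆ T ∪ Set.Iio m := by
    intro j hj
    rcases le_or_gt m j with h | h
    · exact Or.inl ⟨h, hj⟩
    · exact Or.inr h
  have h4 : S.ncard ≤ T.ncard + m := by
    calc S.ncard ≤ (T ∪ Set.Iio m).ncard :=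
          Set.ncard_le_ncard h3 ((hSfin.subset (fun j hj => hj.2)).union (Set.finite_Iio m))
    _ ≤ T.ncard + (Set.Iio m).ncard := Set.ncard_union_le _ _
    _ = T.ncard + m := by simp [Set.ncard_eq_toFinset_card']
  have h5 : (n '' T).ncard ≤ ((n '' U) ∩ Set.Iic N).ncard :=
    Set.ncard_le_ncard h2 ((Set.finite_Iic N).subset Set.inter_subset_right)
  rw [h1, Set.ncard_image_of_injective S hmono.injective]
  rw [Set.ncard_image_of_injective T hmono.injective] at h5
  omega

/-- If `(n_k)` is a strictly increasing sequence of positive integers with positive upper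
density `δ`, then there is `φ : ℕ → ℕ` such that for every strictly increasing sequence
`(k_s)` of positive integers, the set `{n_k : k ∈ ⋃_s [k_s, k_s + φ(k_s)]}` has upper
density equal to `δ`. -/
theorem stmt0 (n : ℕ → ℕ) (hmono : StrictMono n) (hpos : ∀ k, 0 < n k)
    (δ : ℝ) (hδpos : 0 < δ) (hdens : upperDensity (Set.range n) = δ) :
    ∃ φ : ℕ → ℕ, ∀ k : ℕ → ℕ, StrictMono k → (∀ s, 0 < k s) →
      upperDensity (n '' (⋃ s, Set.Icc (k s) (k s + φ (k s)))) = δ := by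
  set f : Set ℕ → ℕ → ℝ := fun A N => ((A ∩ Set.Iic N).ncard : ℝ) / (N + 1) with hf
  -- choose φ
  have hfreq : ∀ m : ℕ, ∃ N, m * (m + 1) ≤ N ∧ δ - 1 / (m + 1) < f (Set.range n) N := by
    intro m
    have h1 : δ - 1 / (m + 1) < upperDensity (Set.range n) := by
      rw [hdens]
      have : (0:ℝ) < 1 / (m + 1) := by positivity
      linarith
    have h2 := Filter.frequently_lt_of_lt_limsup
      ((bddBelow (Set.range n)).isCoboundedUnder_le) h1
    exact Filter.frequently_atTop.mp h2 (m * (m + 1))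
  choose φ hφ1 hφ2 using hfreq
  refine ⟨φ, fun k hk hkpos => ?_⟩
  set U : Set ℕ := ⋃ s, Set.Icc (k s) (k s + φ (k s)) with hU
  refine le_antisymm ?_ ?_
  · -- upper bound: subset of range n
    rw [← hdens]
    refine Filter.limsup_le_limsup (Eventually.of_forall fun N => ?_)
      ((bddBelow _).isCoboundedUnder_le) (bddAbove _)
    have hsub : n '' U ∩ Set.Iic N ⊆ Set.range n ∩ Set.Iic N := by
      rintro x ⟨⟨j, _, rfl⟩, hx⟩; exact ⟨⟨j, rfl⟩, hx⟩
    have := Set.ncard_le_ncard hsub ((Set.finite_Iic N).subset Set.inter_subset_right)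
    exact div_le_div_of_nonneg_right (by exact_mod_cast this) (by positivity)
  · -- lower bound
    have hmain : ∀ ε : ℝ, 0 < ε → δ - ε ≤ upperDensity (n '' U) := by
      intro ε hε
      refine Filter.le_limsup_of_frequently_le ?_ (bddAbove _)
      rw [Filter.frequently_atTop]
      intro a
      obtain ⟨M, hM⟩ := exists_nat_gt (2 / ε)
      set s := max a M with hs
      set m := k s with hm
      have hms : s ≤ m := hk.le_apply
      have hmpos : 0 < m := hkpos s
      refine ⟨φ m, ?_, ?_⟩
      · calc a ≤ s := le_max_left a M
          _ ≤ m := hms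
          _ ≤ m * (m + 1) := Nat.le_mul_of_pos_right m (Nat.succ_pos m)
          _ ≤ φ m := hφ1 m
      · -- f (n '' U) (φ m) ≥ δ - ε
        have hcount := count_key n hmono m (φ m) U
          (Set.subset_iUnion_of_subset s (by rw [hm]))
        have hNpos : (0:ℝ) < (φ m : ℝ) + 1 := by positivity
        have hratio : f (Set.range n) (φ m) - (m : ℝ) / ((φ m : ℝ) + 1)
            ≤ f (n '' U) (φ m) := by
          rw [hf]
          rw [sub_le_iff_le_add, ← add_div, div_le_div_iff_of_pos_right hNpos]
          exact_mod_cast hcount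
        have hsmall : (m : ℝ) / ((φ m : ℝ) + 1) ≤ 1 / (m + 1) := by
          rw [div_le_div_iff₀ hNpos (by positivity)]
          have h1 : (m : ℝ) * (m + 1) ≤ (φ m : ℝ) := by exact_mod_cast hφ1 m
          linarith
        have hes : 2 / ((m:ℝ) + 1) ≤ ε := by
          have hMm : (M : ℝ) ≤ m := by exact_mod_cast le_trans (le_max_right a M) hms
          have h2 : 2 / ε < (m:ℝ) + 1 := by linarith
          rw [div_le_iff₀ (by positivity)]
          rw [div_lt_iff₀ hε] at h2
          linarith
        have := hφ2 m
        have h1o : (1:ℝ) / ((m:ℝ) + 1) + 1 / ((m:ℝ) + 1) = 2 / ((m:ℝ)+1) := by ring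
        have : δ - ε ≤ f (Set.range n) (φ m) - (m : ℝ) / ((φ m : ℝ) + 1) := by
          have := hφ2 m
          push_cast at this ⊢
          linarith
        linarith
    by_contra hcon
    push_neg at hcon
    have := hmain ((δ - upperDensity (n '' U)) / 2) (by linarith)
    linarith
end

section
/- Let ∑_k δ_k be a divergent series of positive real numbers. Then there exists a map φ: ℕ → ℕ such that for every strictly increasing sequence (k_s) of positive integers, setting I = ⋃_s [k_s, k_s + φ(k_s)], one has ∑_{j ∈ I} δ_j = ∞. -/
/-- If `∑ δ_k` is a divergent series of positive reals, there exists `φ : ℕ → ℕ` such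
that for every strictly increasing sequence `(k_s)` of positive integers, the series
restricted to `I = ⋃_s [k_s, k_s + φ(k_s)]` still diverges. -/
theorem stmt3 (δ : ℕ → ℝ) (hpos : ∀ k, 0 < δ k) (hdiv : ¬ Summable δ) :
    ∃ φ : ℕ → ℕ, ∀ k : ℕ → ℕ, StrictMono k → (∀ s, 0 < k s) →
      ¬ Summable (Set.indicator (⋃ s, Set.Icc (k s) (k s + φ (k s))) δ) := by
  have hnn : ∀ i, 0 ≤ δ i := fun i => (hpos i).le
  have htend : Filter.Tendsto (fun n => ∑ i ∈ Finset.range n, δ i) Filter.atTop Filter.atTop :=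
    (not_summable_iff_tendsto_nat_atTop_of_nonneg hnn).mp hdiv
  -- For each n there is p with ∑_{j ∈ Icc n (n+p)} δ j ≥ 1
  have key : ∀ n : ℕ, ∃ p : ℕ, (1 : ℝ) ≤ ∑ j ∈ Finset.Icc n (n + p), δ j := by
    intro n
    obtain ⟨m, hm⟩ := (Filter.tendsto_atTop.mp htend
      (∑ i ∈ Finset.range (n + 1), δ i + 1)).exists
    have hlt : n + 1 ≤ m := by
      by_contra h
      push_neg at h
      have : ∑ i ∈ Finset.range m, δ i ≤ ∑ i ∈ Finset.range (n + 1), δ i :=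
        Finset.sum_le_sum_of_subset_of_nonneg (Finset.range_subset_range.mpr h.le)
          (fun i _ _ => hnn i)
      linarith
    refine ⟨m - 1 - n, ?_⟩
    have hIcc : Finset.Icc n (n + (m - 1 - n)) = Finset.Ico n m := by
      have : n + (m - 1 - n) = m - 1 := by omega
      rw [this]
      ext x
      simp [Finset.mem_Icc, Finset.mem_Ico]
      omega
    rw [hIcc]
    have hsplit : ∑ i ∈ Finset.range m, δ i
        = ∑ i ∈ Finset.range n, δ i + ∑ j ∈ Finset.Ico n m, δ j := by
      rw [Finset.range_eq_Ico, ← Finset.sum_Ico_consecutive _ (Nat.zero_le n) (by omega), Finset.range_eq_Ico]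
    have hmono : ∑ i ∈ Finset.range n, δ i ≤ ∑ i ∈ Finset.range (n + 1), δ i :=
      Finset.sum_le_sum_of_subset_of_nonneg (Finset.range_subset_range.mpr (by omega))
        (fun i _ _ => hnn i)
    linarith
  choose φ hφ using key
  refine ⟨φ, fun k hk hkpos hsum => ?_⟩
  set I := ⋃ s, Set.Icc (k s) (k s + φ (k s)) with hI
  set g := Set.indicator I δ with hg
  have hgnn : ∀ i, 0 ≤ g i := fun i => Set.indicator_nonneg (fun j _ => hnn j) i
  -- build disjoint chain of blocks
  let s : ℕ → ℕ := fun m => Nat.rec 0 (fun _ prev => k prev + φ (k prev) + 1) m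
  have hs_succ : ∀ m, s (m + 1) = k (s m) + φ (k (s m)) + 1 := fun m => rfl
  let a : ℕ → ℕ := fun m => k (s m)
  let b : ℕ → ℕ := fun m => a m + φ (a m)
  have hba : ∀ m, b m < a (m + 1) := by
    intro m
    have h1 : s (m + 1) ≤ k (s (m + 1)) := hk.le_apply
    have h2 := hs_succ m
    simp only [a, b]
    omega
  have hbmono : StrictMono b := by
    apply strictMono_nat_of_lt_succ
    intro m
    have h := hba m
    simp only [a, b] at h ⊢
    omega
  have hchain : ∀ {m m'}, m < m' → b m < a m' := by
    intro m m' hmm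
    calc b m ≤ b (m' - 1) := hbmono.monotone (by omega)
      _ < a m' := by have := hba (m' - 1); rwa [Nat.sub_add_cancel (by omega)] at this
  -- each block sums to ≥ 1 and lies in I
  have hblock : ∀ m, (1 : ℝ) ≤ ∑ j ∈ Finset.Icc (a m) (b m), g j := by
    intro m
    have hsub : ∀ j ∈ Finset.Icc (a m) (b m), g j = δ j := by
      intro j hj
      apply Set.indicator_of_mem
      exact Set.mem_iUnion.mpr ⟨s m, Finset.mem_Icc.mp hj⟩
    rw [Finset.sum_congr rfl hsub]
    exact hφ (a m)
  -- contradiction with summability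
  have hbound : ∀ M : ℕ, (M : ℝ) ≤ ∑' i, g i := by
    intro M
    have hdisj : (Finset.range M : Set ℕ).PairwiseDisjoint
        (fun m => Finset.Icc (a m) (b m)) := by
      intro x _ y _ hxy
      apply Finset.disjoint_left.mpr
      intro j hj hj'
      rw [Finset.mem_Icc] at hj hj'
      rcases lt_or_gt_of_ne hxy with h | h
      · have := hchain h; omega
      · have := hchain h; omega
    have hsum_le : ∑ j ∈ (Finset.range M).biUnion (fun m => Finset.Icc (a m) (b m)), g j
        ≤ ∑' i, g i := Summable.sum_le_tsum _ (fun i _ => hgnn i) hsum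
    rw [Finset.sum_biUnion hdisj] at hsum_le
    calc (M : ℝ) = ∑ _m ∈ Finset.range M, (1 : ℝ) := by simp
      _ ≤ ∑ m ∈ Finset.range M, ∑ j ∈ Finset.Icc (a m) (b m), g j :=
          Finset.sum_le_sum (fun m _ => hblock m)
      _ ≤ ∑' i, g i := hsum_le
  obtain ⟨M, hM⟩ := exists_nat_gt (∑' i, g i)
  exact absurd (hbound M) (by linarith)
end

section
/- Let (w_n)_{n∈ℤ} be a bounded sequence of non-zero complex weights such that ∑_{n≤0} |w_0 w_{−1} ⋯ w_n|^p < ∞ for some 1 ≤ p < ∞. Then for every positive integer k_0 there exists k_1 ≥ k_0 such that ∏_{ν=0}^{n} |w_{−k_1−ν}| ≤ 1 for every n ≥ 0. -/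
/-- Let `(w_n)_{n ∈ ℤ}` be a bounded sequence of non-zero complex weights with
`∑_{n ≤ 0} |w_0 w_{-1} ⋯ w_n|^p < ∞` for some `1 ≤ p < ∞`. Then for every positive
integer `k₀` there is `k₁ ≥ k₀` with `∏_{ν=0}^{n} |w_{-k₁-ν}| ≤ 1` for every `n ≥ 0`. -/
theorem stmt4 (w : ℤ → ℂ) (hb : ∃ C : ℝ, ∀ n, ‖w n‖ ≤ C)
    (hnz : ∀ n, w n ≠ 0) (p : ℝ) (hp : 1 ≤ p)
    (hsum : Summable (fun n : ℕ =>
      (∏ ν ∈ Finset.range (n + 1), ‖w (-(ν : ℤ))‖) ^ p)) :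
    ∀ k₀ : ℕ, 0 < k₀ → ∃ k₁ : ℕ, k₀ ≤ k₁ ∧
      ∀ n : ℕ, ∏ ν ∈ Finset.range (n + 1), ‖w (-(k₁ : ℤ) - ν)‖ ≤ 1 := by
  intro k₀ hk₀
  set a : ℕ → ℝ := fun n => ∏ ν ∈ Finset.range (n + 1), ‖w (-(ν : ℤ))‖ with ha
  have hpos : ∀ n, 0 < a n := by
    intro n
    apply Finset.prod_pos
    intro i _
    exact norm_pos_iff.mpr (hnz _)
  have hp0 : 0 < p := lt_of_lt_of_le one_pos hp
  -- a tends to 0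
  have ht : Filter.Tendsto a Filter.atTop (nhds 0) := by
    have h1 : Filter.Tendsto (fun n => a n ^ p) Filter.atTop (nhds 0) :=
      hsum.tendsto_atTop_zero
    have h2 : Filter.Tendsto (fun x : ℝ => x ^ (1 / p)) (nhds 0) (nhds (0 ^ (1 / p))) :=
      (Real.continuousAt_rpow_const 0 (1 / p) (Or.inr (by positivity))).tendsto
    have h3 := h2.comp h1
    have h4 : (fun n => (a n ^ p) ^ (1 / p)) = a := by
      funext n
      rw [← Real.rpow_mul (hpos n).le, mul_one_div_cancel hp0.ne', Real.rpow_one]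
    rw [Real.zero_rpow (by positivity)] at h3
    rwa [Function.comp_def, h4] at h3
  -- eventually a m < a (k₀ - 1)
  have hev : ∀ᶠ m in Filter.atTop, a m < a (k₀ - 1) :=
    ht.eventually (gt_mem_nhds (hpos (k₀ - 1)))
  obtain ⟨N, hN⟩ := Filter.eventually_atTop.mp hev
  set N' := max N (k₀ - 1) with hN'
  have hne : (Finset.Icc (k₀ - 1) N').Nonempty :=
    ⟨k₀ - 1, Finset.mem_Icc.mpr ⟨le_refl _, le_max_right _ _⟩⟩
  obtain ⟨j, hjmem, hjmax⟩ := Finset.exists_max_image (Finset.Icc (k₀ - 1) N') a hne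
  rw [Finset.mem_Icc] at hjmem
  -- j is a max of a over all m ≥ k₀ - 1
  have hjall : ∀ m, k₀ - 1 ≤ m → a m ≤ a j := by
    intro m hm2
    by_cases hm : m ≤ N'
    · exact hjmax m (Finset.mem_Icc.mpr ⟨hm2, hm⟩)
    · have : a m < a (k₀ - 1) := hN m (le_trans (le_max_left _ _) (le_of_not_ge hm))
      exact this.le.trans (hjmax (k₀ - 1) (Finset.mem_Icc.mpr ⟨le_refl _, le_max_right _ _⟩))
  refine ⟨j + 1, by omega, ?_⟩
  intro n
  -- product identity : a (j + 1 + n) = a j * ∏_{ν < n+1} |w (-(j+1) - ν)|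
  have key : a (j + 1 + n)
      = a j * ∏ ν ∈ Finset.range (n + 1), ‖w (-(↑(j + 1) : ℤ) - ν)‖ := by
    rw [ha]
    simp only
    have h5 : (j + 1 + n) + 1 = (j + 1) + (n + 1) := by ring
    conv_lhs => rw [h5, Finset.prod_range_add]
    congr 1
    apply Finset.prod_congr rfl
    intro i _
    congr 1
    push_cast
    ring
  have hle : a (j + 1 + n) ≤ a j := hjall _ (by omega)
  rw [key] at hle
  have := (mul_le_iff_le_one_right (hpos j)).mp hle
  convert this using 2
end

section
/- Let B_w be a bilateral weighted backward shift on ℓ^p(ℤ) (1 ≤ p < ∞) with bounded weight sequence (w_n)_{n∈ℤ}, satisfying ∑_{n≤0} |w_0 ⋯ w_n|^p < ∞. Then there exists an infinite-dimensional closed subspace M_0 of ℓ^p(ℤ) such that ‖B_w^n x‖ → 0 for every x ∈ M_0. -/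
open Filter

/-- Peak subsequence: if a positive sequence tends to 0, there is a strictly monotone
sequence of indices at which the tail maximum is attained. -/
lemma stmt5_peak_subseq (a : ℕ → ℝ) (hpos : ∀ n, 0 < a n)
    (ha : Tendsto a atTop (nhds 0)) :
    ∃ i : ℕ → ℕ, StrictMono i ∧ ∀ j m, i j ≤ m → a m ≤ a (i j) := by
  have key : ∀ N : ℕ, ∃ i, N ≤ i ∧ ∀ m, i ≤ m → a m ≤ a i := by
    intro N
    have hev : ∀ᶠ m in atTop, a m < a N := ha.eventually (gt_mem_nhds (hpos N))
    obtain ⟨M, hM⟩ := eventually_atTop.1 hev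
    obtain ⟨i, hi_mem, hi_max⟩ :=
      Finset.exists_max_image (Finset.Icc N (max N M)) a ⟨N, by simp⟩
    have hiN : N ≤ i := (Finset.mem_Icc.1 hi_mem).1
    refine ⟨i, hiN, fun m hm => ?_⟩
    by_cases h : m ≤ max N M
    · exact hi_max m (Finset.mem_Icc.2 ⟨hiN.trans hm, h⟩)
    · have hMm : M ≤ m := le_trans (le_max_right N M) (le_of_not_ge h)
      have hN : N ∈ Finset.Icc N (max N M) := by simp
      exact (hM m hMm).le.trans (hi_max N hN)
  choose f hf1 hf2 using key
  refine ⟨fun j => Nat.rec (f 0) (fun _ prev => f (prev + 1)) j, ?_, ?_⟩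
  · apply strictMono_nat_of_lt_succ
    intro j
    exact lt_of_lt_of_le (Nat.lt_succ_self _) (hf1 _)
  · intro j
    cases j with
    | zero => exact hf2 0
    | succ j => exact hf2 _

/-- Product ratio identity. -/
lemma stmt5_prod_ratio (g : ℕ → ℝ) (K n : ℕ) :
    (∏ l ∈ Finset.range n, g (K + 1 + l)) * (∏ ν ∈ Finset.range (K + 1), g ν)
      = ∏ ν ∈ Finset.range (K + n + 1), g ν := by
  induction n with
  | zero => simp
  | succ n ih =>
    have h2 : K + (n + 1) + 1 = (K + n + 1) + 1 := by ring
    rw [h2]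
    conv_rhs => rw [Finset.prod_range_succ]
    rw [Finset.prod_range_succ, mul_right_comm, ih, show K + 1 + n = K + n + 1 by ring]

lemma stmt5_prod_reflect (g : ℕ → ℝ) (K n : ℕ) :
    (∏ l ∈ Finset.range n, g (K + n - l)) = ∏ l ∈ Finset.range n, g (K + 1 + l) := by
  rw [← Finset.prod_range_reflect (fun l => g (K + 1 + l)) n]
  refine Finset.prod_congr rfl fun l hl => ?_
  have hl' := Finset.mem_range.1 hl
  congr 1
  omega

open scoped ENNReal

/-- Let `B_w` be a bilateral weighted backward shift on `ℓ^p(ℤ)` (`1 ≤ p < ∞`) with a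
bounded weight sequence `(w_n)_{n ∈ ℤ}` of non-zero weights, satisfying
`∑_{n ≤ 0} |w_0 ⋯ w_n|^p < ∞`. Then there exists an infinite-dimensional closed subspace
`M₀` of `ℓ^p(ℤ)` such that `‖B_w^n x‖ → 0` for every `x ∈ M₀`. -/
theorem stmt5 (p : ℝ≥0∞) [Fact (1 ≤ p)] (hp : p ≠ ∞)
    (w : ℤ → ℂ) (hb : ∃ C : ℝ, ∀ n, ‖w n‖ ≤ C) (hnz : ∀ n, w n ≠ 0)
    (hsum : Summable (fun n : ℕ =>
      (∏ ν ∈ Finset.range (n + 1), ‖w (-(ν : ℤ))‖) ^ p.toReal))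
    (B : lp (fun _ : ℤ => ℂ) p →L[ℂ] lp (fun _ : ℤ => ℂ) p)
    (hB : ∀ (x : lp (fun _ : ℤ => ℂ) p) (n : ℤ),
      (B x : ∀ _ : ℤ, ℂ) n = w (n + 1) * (x : ∀ _ : ℤ, ℂ) (n + 1)) :
    ∃ M₀ : Submodule ℂ (lp (fun _ : ℤ => ℂ) p),
      IsClosed (M₀ : Set (lp (fun _ : ℤ => ℂ) p)) ∧ ¬ FiniteDimensional ℂ M₀ ∧
      ∀ x ∈ M₀, Filter.Tendsto (fun n : ℕ => ‖(B ^ n) x‖) Filter.atTop (nhds 0) := by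
  classical
  have hp1 : (1 : ℝ≥0∞) ≤ p := Fact.out
  have hp0 : p ≠ 0 := fun h => by simp [h] at hp1
  have ht : 0 < p.toReal := ENNReal.toReal_pos hp0 hp
  -- the weight-products sequence
  set g : ℕ → ℝ := fun ν => ‖w (-(ν : ℤ))‖ with hg
  set a : ℕ → ℝ := fun n => ∏ ν ∈ Finset.range (n + 1), g ν with ha_def
  have hapos : ∀ n, 0 < a n := by
    intro n
    refine Finset.prod_pos fun ν _ => ?_
    exact norm_pos_iff.mpr (hnz _)
  have ha0 : Filter.Tendsto a Filter.atTop (nhds 0) := by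
    have h1 : Filter.Tendsto (fun n => a n ^ p.toReal) Filter.atTop (nhds 0) :=
      hsum.tendsto_atTop_zero
    have hc : ContinuousAt (fun s : ℝ => s ^ p.toReal⁻¹) 0 :=
      Real.continuousAt_rpow_const 0 p.toReal⁻¹ (Or.inr (by positivity))
    have h2 := hc.tendsto.comp h1
    rw [Real.zero_rpow (inv_ne_zero ht.ne')] at h2
    exact h2.congr fun n => Real.rpow_rpow_inv (hapos n).le ht.ne'
  obtain ⟨i, hi_mono, hi_peak⟩ := stmt5_peak_subseq a hapos ha0
  -- the support set
  set D : Set ℤ := Set.range (fun j : ℕ => (-(i j + 1) : ℤ)) with hD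
  -- the subspace
  set M₀ : Submodule ℂ (lp (fun _ : ℤ => ℂ) p) :=
    { carrier := {x | ∀ m : ℤ, m ∉ D → (x : ∀ _ : ℤ, ℂ) m = 0}
      add_mem' := by
        intro x y hx hy m hm
        simp only [lp.coeFn_add, Pi.add_apply, hx m hm, hy m hm, add_zero]
      zero_mem' := by
        intro m _
        simp [lp.coeFn_zero]
      smul_mem' := by
        intro c x hx m hm
        simp only [lp.coeFn_smul, Pi.smul_apply, hx m hm, smul_zero] } with hM₀
  have hmem : ∀ x : lp (fun _ : ℤ => ℂ) p,
      x ∈ M₀ ↔ ∀ m : ℤ, m ∉ D → (x : ∀ _ : ℤ, ℂ) m = 0 := fun x => Iff.rfl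
  -- coordinate evaluations are continuous
  have hcont : ∀ m : ℤ, Continuous (fun x : lp (fun _ : ℤ => ℂ) p => (x : ∀ _ : ℤ, ℂ) m) := by
    intro m
    refine (LipschitzWith.of_dist_le_mul (K := 1) (f := fun x : lp (fun _ : ℤ => ℂ) p => (x : ∀ _ : ℤ, ℂ) m) fun x y => ?_).continuous
    rw [NNReal.coe_one, one_mul, dist_eq_norm, dist_eq_norm]
    have : (x : ∀ _ : ℤ, ℂ) m - (y : ∀ _ : ℤ, ℂ) m = ((x - y : lp (fun _ : ℤ => ℂ) p) : ∀ _ : ℤ, ℂ) m := by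
      simp [lp.coeFn_sub]
    show ‖(x : ∀ _ : ℤ, ℂ) m - (y : ∀ _ : ℤ, ℂ) m‖ ≤ ‖x - y‖
    rw [this]
    exact lp.norm_apply_le_norm hp0 (x - y) m
  refine ⟨M₀, ?_, ?_, ?_⟩
  · -- closed
    have hset : (M₀ : Set (lp (fun _ : ℤ => ℂ) p))
        = ⋂ (m : ℤ) (_ : m ∉ D), {x : lp (fun _ : ℤ => ℂ) p | (x : ∀ _ : ℤ, ℂ) m = 0} := by
      ext x
      simp [Set.mem_iInter, hmem]
    rw [hset]
    exact isClosed_iInter fun m => isClosed_iInter fun _ =>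
      isClosed_eq (hcont m) continuous_const
  · -- infinite dimensional
    intro hFD
    have hminj : Function.Injective (fun j : ℕ => (-(i j + 1) : ℤ)) := by
      intro a b h
      simp only [neg_inj, add_left_inj, Nat.cast_inj] at h
      exact hi_mono.injective h
    set u : ℕ → lp (fun _ : ℤ => ℂ) p := fun j => lp.single p (-(i j + 1) : ℤ) (1 : ℂ) with hu
    have humem : ∀ j : ℕ, u j ∈ M₀ := by
      intro j m hm
      have hne : m ≠ (-(i j + 1) : ℤ) := fun h => hm ⟨j, h.symm⟩
      exact lp.single_apply_ne p _ _ hne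
    have hul : LinearIndependent ℂ u := by
      rw [linearIndependent_iff']
      intro s c hc j hj
      have h1 := congrArg (fun y : lp (fun _ : ℤ => ℂ) p =>
        (y : ∀ _ : ℤ, ℂ) (-(i j + 1) : ℤ)) hc
      simp only [lp.coeFn_zero, Pi.zero_apply] at h1
      rw [lp.coeFn_sum, Finset.sum_apply] at h1
      rw [Finset.sum_eq_single j (fun b _ hbj => ?_) (fun h => absurd hj h)] at h1
      · rw [lp.coeFn_smul, Pi.smul_apply, hu] at h1
        rw [lp.single_apply_self] at h1
        simpa using h1
      · rw [lp.coeFn_smul, Pi.smul_apply, hu, lp.single_apply_ne, smul_zero]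
        exact fun h => hbj (hminj h.symm)
    have hvl : LinearIndependent ℂ (fun j : ℕ => (⟨u j, humem j⟩ : M₀)) := by
      apply LinearIndependent.of_comp M₀.subtype
      convert hul
      rfl
    have := hvl.lt_aleph0_of_finiteDimensional
    simp [Cardinal.mk_nat] at this
  · -- convergence
    intro x hx
    set t := p.toReal with htdef
    -- coordinates of B^n y
    have hcoord : ∀ (n : ℕ) (y : lp (fun _ : ℤ => ℂ) p) (m : ℤ),
        ((B ^ n) y : ∀ _ : ℤ, ℂ) m
          = (∏ l ∈ Finset.range n, w (m + 1 + l)) * (y : ∀ _ : ℤ, ℂ) (m + n) := by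
      intro n
      induction n with
      | zero => intro y m; simp
      | succ n ih =>
        intro y m
        rw [pow_succ, ContinuousLinearMap.mul_apply, ih (B y) m, hB y (m + n),
          Finset.prod_range_succ]
        have e1 : (m : ℤ) + 1 + (n : ℕ) = m + (n : ℕ) + 1 := by ring
        have e2 : (m : ℤ) + ((n + 1 : ℕ) : ℤ) = m + (n : ℕ) + 1 := by push_cast; ring
        rw [e1, e2]
        ring
    -- the summands
    set F : ℕ → ℤ → ℝ := fun n m =>
      (∏ l ∈ Finset.range n, ‖w (m - n + 1 + l)‖) ^ t * ‖(x : ∀ _ : ℤ, ℂ) m‖ ^ t with hFdef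
    have hF : ∀ n : ℕ, ‖(B ^ n) x‖ ^ t = ∑' m : ℤ, F n m := by
      intro n
      rw [lp.norm_rpow_eq_tsum ht ((B ^ n) x)]
      rw [← Equiv.tsum_eq (Equiv.subRight (n : ℤ))
        (fun m => ‖((B ^ n) x : ∀ _ : ℤ, ℂ) m‖ ^ t)]
      refine tsum_congr fun m => ?_
      simp only [Equiv.subRight_apply]
      rw [hcoord n x (m - n), sub_add_cancel, norm_mul, norm_prod,
        Real.mul_rpow (by positivity) (by positivity)]
    -- ratio formula
    have hratio : ∀ (j n : ℕ),
        (∏ l ∈ Finset.range n, ‖w ((-(i j + 1) : ℤ) - n + 1 + l)‖)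
          = a (i j + n) / a (i j) := by
      intro j n
      have key : ∀ l ∈ Finset.range n,
          ‖w ((-(i j + 1) : ℤ) - n + 1 + l)‖ = g (i j + n - l) := by
        intro l hl
        have hl' := Finset.mem_range.1 hl
        have hcast : ((-(i j + 1) : ℤ) - n + 1 + l) = -((i j + n - l : ℕ) : ℤ) := by
          push_cast [Nat.cast_sub (by omega : l ≤ i j + n)]
          ring
        rw [hcast]
      rw [Finset.prod_congr rfl key, stmt5_prod_reflect g (i j) n,
        eq_div_iff (hapos (i j)).ne']
      exact stmt5_prod_ratio g (i j) n
    -- pointwise limits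
    have hFlim : ∀ m : ℤ, Filter.Tendsto (fun n => F n m) Filter.atTop (nhds 0) := by
      intro m
      by_cases hmD : m ∈ D
      · obtain ⟨j, hj⟩ := hmD
        have hFval : ∀ n, F n m
            = (a (i j + n) / a (i j)) ^ t * ‖(x : ∀ _ : ℤ, ℂ) m‖ ^ t := by
          intro n
          rw [hFdef]
          simp only [← hj]
          rw [hratio j n]
        have h1 : Filter.Tendsto (fun n : ℕ => a (i j + n)) Filter.atTop (nhds 0) := by
          refine ha0.comp ?_
          exact Filter.tendsto_atTop_mono (fun n => Nat.le_add_left n (i j)) Filter.tendsto_id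
        have h2 : Filter.Tendsto (fun n : ℕ => a (i j + n) / a (i j))
            Filter.atTop (nhds 0) := by
          simpa using h1.div_const (a (i j))
        have hc : ContinuousAt (fun s : ℝ => s ^ t) 0 :=
          Real.continuousAt_rpow_const 0 t (Or.inr ht.le)
        have h3 := hc.tendsto.comp h2
        rw [Real.zero_rpow ht.ne'] at h3
        have h4 := h3.mul_const (‖(x : ∀ _ : ℤ, ℂ) m‖ ^ t)
        rw [zero_mul] at h4
        exact h4.congr fun n => (hFval n).symm
      · have hx0 : (x : ∀ _ : ℤ, ℂ) m = 0 := hx m hmD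
        have : ∀ n, F n m = 0 := by
          intro n
          rw [hFdef]
          simp [hx0, Real.zero_rpow ht.ne']
        exact Filter.Tendsto.congr (fun n => (this n).symm) tendsto_const_nhds
    -- the uniform bound
    have hFbd : ∀ (n : ℕ) (m : ℤ), ‖F n m‖ ≤ ‖(x : ∀ _ : ℤ, ℂ) m‖ ^ t := by
      intro n m
      rw [Real.norm_of_nonneg (by rw [hFdef]; positivity)]
      by_cases hmD : m ∈ D
      · obtain ⟨j, hj⟩ := hmD
        have hFval : F n m
            = (a (i j + n) / a (i j)) ^ t * ‖(x : ∀ _ : ℤ, ℂ) m‖ ^ t := by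
          rw [hFdef]
          simp only [← hj]
          rw [hratio j n]
        rw [hFval]
        have hr1 : a (i j + n) / a (i j) ≤ 1 :=
          (div_le_one (hapos _)).2 (hi_peak j _ (Nat.le_add_right _ _))
        have hr2 : (a (i j + n) / a (i j)) ^ t ≤ 1 :=
          Real.rpow_le_one (by positivity) hr1 ht.le
        exact mul_le_of_le_one_left (by positivity) hr2
      · have hx0 : (x : ∀ _ : ℤ, ℂ) m = 0 := hx m hmD
        rw [hFdef]
        simp [hx0, Real.zero_rpow ht.ne']
    have hbound : Summable (fun m : ℤ => ‖(x : ∀ _ : ℤ, ℂ) m‖ ^ t) :=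
      (lp.memℓp x).summable ht
    have hkey : Filter.Tendsto (fun n : ℕ => ‖(B ^ n) x‖ ^ t) Filter.atTop (nhds 0) := by
      have hdc := tendsto_tsum_of_dominated_convergence (f := F)
        (g := fun _ : ℤ => (0 : ℝ)) (bound := fun m => ‖(x : ∀ _ : ℤ, ℂ) m‖ ^ t)
        hbound hFlim (Filter.Eventually.of_forall fun n => hFbd n)
      rw [tsum_zero] at hdc
      exact hdc.congr fun n => (hF n).symm
    have hc : ContinuousAt (fun s : ℝ => s ^ t⁻¹) 0 :=
      Real.continuousAt_rpow_const 0 t⁻¹ (Or.inr (by positivity))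
    have hfin := hc.tendsto.comp hkey
    rw [Real.zero_rpow (inv_ne_zero ht.ne')] at hfin
    exact hfin.congr fun n => Real.rpow_rpow_inv (norm_nonneg _) ht.ne'
end

section
/- Let X = ℓ^2 ⊕ ℓ^2 (Hilbert space direct sum) and let M be a closed infinite-dimensional subspace of X. Let P_1, P_2 be the coordinate projections. Then at least one of P_1(M), P_2(M) contains a closed infinite-dimensional subspace of ℓ^2. -/
open scoped ENNReal

section Aux
open scoped InnerProductSpace NNReal
open RCLike ContinuousLinearMap
set_option maxHeartbeats 1000000
variable {H : Type*} [NormedAddCommGroup H] [InnerProductSpace ℂ H] [CompleteSpace H]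
variable {F : Type*} [NormedAddCommGroup F] [InnerProductSpace ℂ F] [CompleteSpace F]

set_option linter.unusedSectionVars false

lemma stmt14_image_lemma (T : H →L[ℂ] F) (V : Submodule ℂ H) (hVc : IsClosed (V : Set H))
    (hVinf : ¬ FiniteDimensional ℂ V) (c : ℝ≥0) (hbound : ∀ x ∈ V, ‖x‖ ≤ c * ‖T x‖) :
    ∃ N : Submodule ℂ F, IsClosed (N : Set F) ∧ ¬ FiniteDimensional ℂ N ∧
      N ≤ LinearMap.range (T : H →ₗ[ℂ] F) := by
  have : CompleteSpace V := hVc.completeSpace_coe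
  set T₁ : V →L[ℂ] F := T.comp V.subtypeL with hT₁
  have hb : ∀ v : V, ‖v‖ ≤ c * ‖T₁ v‖ := fun v => hbound v v.2
  have hanti : AntilipschitzWith c T₁ := T₁.antilipschitz_of_bound hb
  refine ⟨V.map (T : H →ₗ[ℂ] F), ?_, ?_,
    Submodule.map_le_iff_le_comap.mpr (fun x _ => LinearMap.mem_range_self _ x)⟩
  · have : (V.map (T : H →ₗ[ℂ] F) : Set F) = Set.range T₁ := by
      ext y
      constructor
      · rintro ⟨x, hx, rfl⟩; exact ⟨⟨x, hx⟩, rfl⟩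
      · rintro ⟨⟨x, hx⟩, rfl⟩; exact ⟨x, hx, rfl⟩
    rw [this]
    exact hanti.isClosed_range T₁.uniformContinuous
  · intro hfin
    apply hVinf
    have hinj : Function.Injective T₁ := hanti.injective
    let φ : V →ₗ[ℂ] V.map (T : H →ₗ[ℂ] F) :=
      ((T : H →ₗ[ℂ] F).domRestrict V).codRestrict _ (fun v => Submodule.mem_map_of_mem v.2)
    have hφinj : Function.Injective φ := by
      intro a b hab
      apply hinj
      exact congrArg Subtype.val hab
    exact FiniteDimensional.of_injective φ hφinj

lemma stmt14_key_lemma (A B : H →L[ℂ] F) (hAB : ∀ x, ‖A x‖^2 + ‖B x‖^2 = ‖x‖^2)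
    (hinf : ¬ FiniteDimensional ℂ H) :
    (∃ N : Submodule ℂ F, IsClosed (N : Set F) ∧ ¬ FiniteDimensional ℂ N ∧
      N ≤ LinearMap.range (A : H →ₗ[ℂ] F)) ∨
    (∃ N : Submodule ℂ F, IsClosed (N : Set F) ∧ ¬ FiniteDimensional ℂ N ∧
      N ≤ LinearMap.range (B : H →ₗ[ℂ] F)) := by
  classical
  have hsymm : ∀ (T : H →L[ℂ] H), IsSelfAdjoint T → ∀ x y : H, ⟪T x, y⟫_ℂ = ⟪x, T y⟫_ℂ :=
    fun T hT x y => hT.isSymmetric x y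
  set C : H →L[ℂ] H := (ContinuousLinearMap.adjoint A).comp A with hCdef
  have hCsa : IsSelfAdjoint C := by
    rw [hCdef, IsSelfAdjoint, ContinuousLinearMap.star_eq_adjoint,
      ContinuousLinearMap.adjoint_comp, ContinuousLinearMap.adjoint_adjoint]
  have hCinner : ∀ x : H, re ⟪C x, x⟫_ℂ = ‖A x‖^2 := by
    intro x
    rw [hCdef, ContinuousLinearMap.comp_apply, ContinuousLinearMap.adjoint_inner_left,
      inner_self_eq_norm_sq_to_K]
    norm_cast
  set f : ℝ → ℝ := fun t => max (t - 1/2) 0 with hfdef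
  set g : ℝ → ℝ := fun t => max (3/4 - t) 0 with hgdef
  have hfc : Continuous f := by fun_prop
  have hgc : Continuous g := by fun_prop
  set F₁ : H →L[ℂ] H := cfc f C with hF₁def
  set G : H →L[ℂ] H := cfc g C with hGdef
  have hF₁sa : IsSelfAdjoint F₁ := cfc_predicate f C
  have hGsa : IsSelfAdjoint G := cfc_predicate g C
  have hid : cfc (fun t : ℝ => t) C = C := cfc_id' ℝ C hCsa
  have key1 : cfc (fun t => (1/2 : ℝ) * (f t * f t)) C ≤ cfc (fun t => t * (f t * f t)) C := by
    apply cfc_mono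
    · intro t _
      rcases le_or_gt t (1/2) with h | h
      · have : f t = 0 := by simp [hfdef]; linarith
        simp [this]
      · nlinarith [mul_self_nonneg (f t)]
    · exact (continuous_const.mul (hfc.mul hfc)).continuousOn
    · exact (continuous_id'.mul (hfc.mul hfc)).continuousOn
  have key2 : cfc (fun t => t * (g t * g t)) C ≤ cfc (fun t => (3/4 : ℝ) * (g t * g t)) C := by
    apply cfc_mono
    · intro t _
      rcases le_or_gt t (3/4) with h | h
      · nlinarith [mul_self_nonneg (g t)]
      · have : g t = 0 := by simp [hgdef]; linarith
        simp [this]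
    · exact (continuous_id'.mul (hgc.mul hgc)).continuousOn
    · exact (continuous_const.mul (hgc.mul hgc)).continuousOn
  have hmulf : cfc (fun t => t * (f t * f t)) C = F₁ * (C * F₁) := by
    rw [show (fun t => t * (f t * f t)) = (fun t => f t * (t * f t)) from by funext t; ring,
      cfc_mul f (fun t => t * f t) C hfc.continuousOn ((continuous_id'.mul hfc).continuousOn),
      cfc_mul (fun t => t) f C continuous_id'.continuousOn hfc.continuousOn, hid]
  have hmulg : cfc (fun t => t * (g t * g t)) C = G * (C * G) := by
    rw [show (fun t => t * (g t * g t)) = (fun t => g t * (t * g t)) from by funext t; ring,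
      cfc_mul g (fun t => t * g t) C hgc.continuousOn ((continuous_id'.mul hgc).continuousOn),
      cfc_mul (fun t => t) g C continuous_id'.continuousOn hgc.continuousOn, hid]
  have hsqf : cfc (fun t => (1/2 : ℝ) * (f t * f t)) C = (1/2 : ℝ) • (F₁ * F₁) := by
    rw [cfc_const_mul _ (fun t => f t * f t) C ((hfc.mul hfc).continuousOn),
      cfc_mul f f C hfc.continuousOn hfc.continuousOn]
  have hsqg : cfc (fun t => (3/4 : ℝ) * (g t * g t)) C = (3/4 : ℝ) • (G * G) := by
    rw [cfc_const_mul _ (fun t => g t * g t) C ((hgc.mul hgc).continuousOn),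
      cfc_mul g g C hgc.continuousOn hgc.continuousOn]
  have hAF : ∀ y : H, (1/2 : ℝ) * ‖F₁ y‖^2 ≤ ‖A (F₁ y)‖^2 := by
    intro y
    have hpos := ((ContinuousLinearMap.le_def _ _).mp key1).inner_nonneg_left y
    rw [hmulf, hsqf] at hpos
    have h1 : re ⟪(F₁ * (C * F₁)) y, y⟫_ℂ = ‖A (F₁ y)‖^2 := by
      have he : (F₁ * (C * F₁)) y = F₁ (C (F₁ y)) := rfl
      rw [he, hsymm F₁ hF₁sa]
      exact hCinner (F₁ y)
    have h2 : re ⟪((1/2 : ℝ) • (F₁ * F₁)) y, y⟫_ℂ = (1/2 : ℝ) * ‖F₁ y‖^2 := by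
      have he : ((1/2 : ℝ) • (F₁ * F₁)) y = (1/2 : ℝ) • (F₁ (F₁ y)) := rfl
      rw [he, real_smul_eq_coe_smul (K := ℂ), inner_smul_real_left, RCLike.smul_re,
        hsymm F₁ hF₁sa, inner_self_eq_norm_sq_to_K]
      norm_cast
    rw [ContinuousLinearMap.sub_apply, inner_sub_left] at hpos
    replace hpos := (RCLike.nonneg_iff.mp hpos).1
    rw [map_sub, sub_nonneg, h2, h1] at hpos
    exact hpos
  have hBG : ∀ y : H, (1/2 : ℝ) * ‖G y‖ ≤ ‖B (G y)‖ := by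
    intro y
    have hpos := ((ContinuousLinearMap.le_def _ _).mp key2).inner_nonneg_left y
    rw [hmulg, hsqg] at hpos
    have h1 : re ⟪(G * (C * G)) y, y⟫_ℂ = ‖A (G y)‖^2 := by
      have he : (G * (C * G)) y = G (C (G y)) := rfl
      rw [he, hsymm G hGsa]
      exact hCinner (G y)
    have h2 : re ⟪((3/4 : ℝ) • (G * G)) y, y⟫_ℂ = (3/4 : ℝ) * ‖G y‖^2 := by
      have he : ((3/4 : ℝ) • (G * G)) y = (3/4 : ℝ) • (G (G y)) := rfl
      rw [he, real_smul_eq_coe_smul (K := ℂ), inner_smul_real_left, RCLike.smul_re,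
        hsymm G hGsa, inner_self_eq_norm_sq_to_K]
      norm_cast
    rw [ContinuousLinearMap.sub_apply, inner_sub_left] at hpos
    replace hpos := (RCLike.nonneg_iff.mp hpos).1
    rw [map_sub, sub_nonneg, h1, h2] at hpos
    have hnorm := hAB (G y)
    nlinarith [norm_nonneg (B (G y)), norm_nonneg (G y)]
  have hAF' : ∀ y : H, (1/2 : ℝ) * ‖F₁ y‖ ≤ ‖A (F₁ y)‖ := by
    intro y
    have := hAF y
    nlinarith [norm_nonneg (A (F₁ y)), norm_nonneg (F₁ y)]
  have hfg : ∀ t : ℝ, (1/4 : ℝ) ≤ f t + g t := by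
    intro t
    have h1 : t - 1/2 ≤ f t := le_max_left _ _
    have h2 : (3/4 - t : ℝ) ≤ g t := le_max_left _ _
    linarith
  have hU : IsUnit (cfc (fun t => f t + g t) C) := by
    by_contra hu
    have h0 : (0:ℝ) ∈ spectrum ℝ (cfc (fun t => f t + g t) C) :=
      (spectrum.zero_mem_iff ℝ).mpr hu
    rw [cfc_map_spectrum (fun t => f t + g t) C (hf := (hfc.add hgc).continuousOn)] at h0
    obtain ⟨t, -, ht⟩ := h0
    have ht' : f t + g t = 0 := ht
    linarith [hfg t]
  have hUsum : cfc (fun t => f t + g t) C = F₁ + G := cfc_add C f g hfc.continuousOn hgc.continuousOn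
  have htop : ∀ y : H, y ∈ (LinearMap.range (F₁ : H →ₗ[ℂ] H) ⊔ LinearMap.range (G : H →ₗ[ℂ] H)) := by
    intro y
    obtain ⟨u, hu⟩ := hU
    have heq : (F₁ + G) (((↑u⁻¹ : H →L[ℂ] H)) y) = y := by
      rw [← hUsum, ← ContinuousLinearMap.mul_apply, ← hu, Units.mul_inv,
        ContinuousLinearMap.one_apply]
    refine Submodule.mem_sup.mpr ⟨F₁ ((↑u⁻¹ : H →L[ℂ] H) y), LinearMap.mem_range_self _ _,
      G ((↑u⁻¹ : H →L[ℂ] H) y), LinearMap.mem_range_self _ _, ?_⟩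
    rw [← ContinuousLinearMap.add_apply]
    exact heq
  set V₁ := (LinearMap.range (F₁ : H →ₗ[ℂ] H)).topologicalClosure with hV₁
  set V₂ := (LinearMap.range (G : H →ₗ[ℂ] H)).topologicalClosure with hV₂
  have hV₁c : IsClosed (V₁ : Set H) := Submodule.isClosed_topologicalClosure _
  have hV₂c : IsClosed (V₂ : Set H) := Submodule.isClosed_topologicalClosure _
  have hV₁b : ∀ x ∈ V₁, ‖x‖ ≤ ((2:ℝ≥0) : ℝ) * ‖A x‖ := by
    have hcl : IsClosed {x : H | ‖x‖ ≤ 2 * ‖A x‖} := by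
      have he : {x : H | ‖x‖ ≤ 2 * ‖A x‖} = {x : H | ‖x‖ - 2 * ‖A x‖ ≤ 0} := by
        ext x; simp [sub_nonpos]
      rw [he]
      exact isClosed_le (by fun_prop) continuous_const
    intro x hx
    have hsub : (V₁ : Set H) ⊆ {x : H | ‖x‖ ≤ 2 * ‖A x‖} := by
      rw [hV₁, Submodule.topologicalClosure_coe]
      apply closure_minimal _ hcl
      rintro _ ⟨y, rfl⟩
      have := hAF' y
      simp only [Set.mem_setOf_eq, ContinuousLinearMap.coe_coe]
      linarith
    simpa using hsub hx
  have hV₂b : ∀ x ∈ V₂, ‖x‖ ≤ ((2:ℝ≥0) : ℝ) * ‖B x‖ := by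
    have hcl : IsClosed {x : H | ‖x‖ ≤ 2 * ‖B x‖} := by
      have he : {x : H | ‖x‖ ≤ 2 * ‖B x‖} = {x : H | ‖x‖ - 2 * ‖B x‖ ≤ 0} := by
        ext x; simp [sub_nonpos]
      rw [he]
      exact isClosed_le (by fun_prop) continuous_const
    intro x hx
    have hsub : (V₂ : Set H) ⊆ {x : H | ‖x‖ ≤ 2 * ‖B x‖} := by
      rw [hV₂, Submodule.topologicalClosure_coe]
      apply closure_minimal _ hcl
      rintro _ ⟨y, rfl⟩
      have := hBG y
      simp only [Set.mem_setOf_eq, ContinuousLinearMap.coe_coe]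
      linarith
    simpa using hsub hx
  have hdich : ¬ FiniteDimensional ℂ V₁ ∨ ¬ FiniteDimensional ℂ V₂ := by
    by_contra hcon
    push_neg at hcon
    obtain ⟨h1, h2⟩ := hcon
    apply hinf
    have hsup : FiniteDimensional ℂ (V₁ ⊔ V₂ : Submodule ℂ H) :=
      Submodule.finiteDimensional_sup V₁ V₂
    have htop' : V₁ ⊔ V₂ = ⊤ := by
      rw [eq_top_iff]
      intro y _
      have hy := htop y
      have hle : LinearMap.range (F₁ : H →ₗ[ℂ] H) ⊔ LinearMap.range (G : H →ₗ[ℂ] H) ≤ V₁ ⊔ V₂ :=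
        sup_le_sup (Submodule.le_topologicalClosure _) (Submodule.le_topologicalClosure _)
      exact hle hy
    rw [htop'] at hsup
    exact (Submodule.topEquiv (R := ℂ) (M := H)).finiteDimensional
  rcases hdich with h | h
  · exact Or.inl (stmt14_image_lemma A V₁ hV₁c h 2 hV₁b)
  · exact Or.inr (stmt14_image_lemma B V₂ hV₂c h 2 hV₂b)

end Aux

/-- Let `X = ℓ² ⊕ ℓ²` and `M` a closed infinite-dimensional subspace of `X`.  Then at
least one of the coordinate projections `P₁(M)`, `P₂(M)` contains a closed
infinite-dimensional subspace of `ℓ²`. -/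
theorem stmt14
    (M : Submodule ℂ (lp (fun _ : ℕ => ℂ) 2 × lp (fun _ : ℕ => ℂ) 2))
    (hclosed : IsClosed (M : Set (lp (fun _ : ℕ => ℂ) 2 × lp (fun _ : ℕ => ℂ) 2)))
    (hinf : ¬ FiniteDimensional ℂ M) :
    (∃ N : Submodule ℂ (lp (fun _ : ℕ => ℂ) 2),
        IsClosed (N : Set (lp (fun _ : ℕ => ℂ) 2)) ∧ ¬ FiniteDimensional ℂ N ∧
        N ≤ M.map (LinearMap.fst ℂ (lp (fun _ : ℕ => ℂ) 2) (lp (fun _ : ℕ => ℂ) 2))) ∨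
    (∃ N : Submodule ℂ (lp (fun _ : ℕ => ℂ) 2),
        IsClosed (N : Set (lp (fun _ : ℕ => ℂ) 2)) ∧ ¬ FiniteDimensional ℂ N ∧
        N ≤ M.map (LinearMap.snd ℂ (lp (fun _ : ℕ => ℂ) 2) (lp (fun _ : ℕ => ℂ) 2))) := by
  classical
  set E := lp (fun _ : ℕ => ℂ) 2 with hE
  let e : WithLp 2 (E × E) ≃L[ℂ] E × E := WithLp.prodContinuousLinearEquiv 2 ℂ E E
  set M' : Submodule ℂ (WithLp 2 (E × E)) :=
    M.comap (e.toLinearEquiv : WithLp 2 (E × E) →ₗ[ℂ] E × E) with hM'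
  have hM'c : IsClosed (M' : Set (WithLp 2 (E × E))) := by
    rw [hM', Submodule.comap_coe]
    exact hclosed.preimage e.continuous
  have : CompleteSpace M' := hM'c.completeSpace_coe
  set A : M' →L[ℂ] E :=
    (ContinuousLinearMap.fst ℂ E E).comp ((e : WithLp 2 (E × E) →L[ℂ] E × E).comp M'.subtypeL)
    with hA
  set B : M' →L[ℂ] E :=
    (ContinuousLinearMap.snd ℂ E E).comp ((e : WithLp 2 (E × E) →L[ℂ] E × E).comp M'.subtypeL)
    with hB
  have hAB : ∀ x : M', ‖A x‖^2 + ‖B x‖^2 = ‖x‖^2 :=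
    fun x => (WithLp.prod_norm_sq_eq_of_L2 ((x : WithLp 2 (E × E)))).symm
  have hinf' : ¬ FiniteDimensional ℂ M' := by
    intro h
    exact hinf ((LinearEquiv.ofSubmodule' e.toLinearEquiv M).finiteDimensional)
  rcases stmt14_key_lemma A B hAB hinf' with ⟨N, hNc, hNf, hNle⟩ | ⟨N, hNc, hNf, hNle⟩
  · refine Or.inl ⟨N, hNc, hNf, le_trans hNle ?_⟩
    rintro _ ⟨x, rfl⟩
    exact ⟨e (x : WithLp 2 (E × E)), x.2, rfl⟩
  · refine Or.inr ⟨N, hNc, hNf, le_trans hNle ?_⟩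
    rintro _ ⟨x, rfl⟩
    exact ⟨e (x : WithLp 2 (E × E)), x.2, rfl⟩
end
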